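/- arXiv:1712.00066 — 4 statements merged into one kernel-verified Lean document; each statement's English description precedes it below -/
import Mathlib

section
/- A countable group G is left orderable if and only if G admits a faithful action by orientation-preserving homeomorphisms of the real line, i.e., an injective homomorphism G → Homeo₊(ℝ). -/
open Function

lemma orderIso_real_ext {f g : ℝ ≃o ℝ} (h : ∀ q : ℚ, f (q:ℝ) = g (q:ℝ)) : f = g := by
  have hf : Continuous f := f.toHomeomorph.continuous
  have hg : Continuous g := g.toHomeomorph.continuous
  have : (f : ℝ → ℝ) = g := by
    refine Continuous.ext_on (Rat.denseRange_cast (𝕜 := ℝ)) hf hg ?_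
    rintro x ⟨q, rfl⟩
    exact h q
  ext x
  exact congrFun this x

noncomputable def extFun (f : ℚ ≃o ℚ) (x : ℝ) : ℝ :=
  sSup ((fun q : ℚ => (f q : ℝ)) '' {q : ℚ | (q:ℝ) ≤ x})

lemma extFun_set_nonempty (f : ℚ ≃o ℚ) (x : ℝ) :
    ((fun q : ℚ => (f q : ℝ)) '' {q : ℚ | (q:ℝ) ≤ x}).Nonempty := by
  obtain ⟨q, hq⟩ := exists_rat_lt x
  exact ⟨f q, ⟨q, hq.le, rfl⟩⟩

lemma extFun_set_bdd (f : ℚ ≃o ℚ) (x : ℝ) :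
    BddAbove ((fun q : ℚ => (f q : ℝ)) '' {q : ℚ | (q:ℝ) ≤ x}) := by
  obtain ⟨q0, hq0⟩ := exists_rat_gt x
  refine ⟨(f q0 : ℝ), ?_⟩
  rintro y ⟨q, hq, rfl⟩
  dsimp only
  have : q ≤ q0 := by exact_mod_cast (le_trans hq hq0.le)
  exact_mod_cast f.monotone this

lemma extFun_rat (f : ℚ ≃o ℚ) (r : ℚ) : extFun f (r : ℝ) = (f r : ℝ) := by
  apply le_antisymm
  · refine csSup_le (extFun_set_nonempty f _) ?_
    rintro y ⟨q, hq, rfl⟩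
    dsimp only
    have : q ≤ r := by exact_mod_cast hq
    exact_mod_cast f.monotone this
  · exact le_csSup (extFun_set_bdd f _) ⟨r, Set.mem_setOf_eq ▸ le_refl _, rfl⟩

lemma extFun_strictMono (f : ℚ ≃o ℚ) : StrictMono (extFun f) := by
  intro x y hxy
  obtain ⟨q1, hq1, hq1'⟩ := exists_rat_btwn hxy
  obtain ⟨q2, hq2, hq2'⟩ := exists_rat_btwn hq1'
  have h1 : extFun f x ≤ (f q1 : ℝ) := by
    refine csSup_le (extFun_set_nonempty f _) ?_
    rintro z ⟨q, hq, rfl⟩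
    dsimp only
    have : q ≤ q1 := by exact_mod_cast le_trans hq hq1.le
    exact_mod_cast f.monotone this
  have h2 : (f q2 : ℝ) ≤ extFun f y :=
    le_csSup (extFun_set_bdd f _) ⟨q2, hq2'.le, rfl⟩
  have h12 : (f q1 : ℝ) < (f q2 : ℝ) := by
    exact_mod_cast f.strictMono (by exact_mod_cast hq2)
  exact lt_of_le_of_lt h1 (lt_of_lt_of_le h12 h2)

lemma extFun_surjective (f : ℚ ≃o ℚ) : Surjective (extFun f) := by
  intro y
  refine ⟨extFun f.symm y, le_antisymm ?_ ?_⟩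
  · refine csSup_le (extFun_set_nonempty f _) ?_
    rintro z ⟨q, hq, rfl⟩
    dsimp only
    by_contra hc
    push_neg at hc
    obtain ⟨p', hp1, hp2⟩ := exists_rat_btwn hc
    have hx : extFun f.symm y ≤ (f.symm p' : ℝ) := by
      refine csSup_le (extFun_set_nonempty f.symm _) ?_
      rintro z ⟨p, hp, rfl⟩
      dsimp only
      have : p ≤ p' := by exact_mod_cast le_trans hp hp1.le
      exact_mod_cast f.symm.monotone this
    have hlt : f.symm p' < q := by
      have : p' < f q := by exact_mod_cast hp2
      have := f.symm.strictMono this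
      simpa using this
    have : (q : ℝ) ≤ (f.symm p' : ℝ) := le_trans hq hx
    exact absurd (lt_of_le_of_lt this (by exact_mod_cast hlt)) (lt_irrefl _)
  · refine le_of_forall_lt ?_
    intro z hz
    obtain ⟨p, hp1, hp2⟩ := exists_rat_btwn hz
    have hmem : (f.symm p : ℝ) ≤ extFun f.symm y :=
      le_csSup (extFun_set_bdd f.symm _) ⟨p, hp2.le, rfl⟩
    have : (f (f.symm p) : ℝ) ≤ extFun f (extFun f.symm y) :=
      le_csSup (extFun_set_bdd f _) ⟨f.symm p, hmem, rfl⟩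
    rw [f.apply_symm_apply] at this
    exact lt_of_lt_of_le hp1 this

noncomputable def extIso (f : ℚ ≃o ℚ) : ℝ ≃o ℝ :=
  StrictMono.orderIsoOfSurjective (extFun f) (extFun_strictMono f) (extFun_surjective f)

lemma extIso_rat (f : ℚ ≃o ℚ) (q : ℚ) : extIso f (q : ℝ) = (f q : ℝ) := extFun_rat f q

noncomputable def extHom : (ℚ ≃o ℚ) →* (ℝ ≃o ℝ) :=
  MonoidHom.mk' extIso (by
    intro f g
    refine orderIso_real_ext fun q => ?_
    have : (f * g) q = f (g q) := rfl
    calc extIso (f * g) (q:ℝ) = ((f * g) q : ℝ) := extIso_rat _ q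
      _ = (f (g q) : ℝ) := by rw [this]
      _ = extIso f ((g q : ℚ) : ℝ) := (extIso_rat f (g q)).symm
      _ = extIso f (extIso g (q:ℝ)) := by rw [extIso_rat g q]
      _ = (extIso f * extIso g) (q:ℝ) := rfl)

lemma extHom_injective : Injective extHom := by
  intro f g h
  ext q
  have : extIso f (q:ℝ) = extIso g (q:ℝ) := by
    show extHom f (q:ℝ) = extHom g (q:ℝ); rw [h]
  rw [extIso_rat, extIso_rat] at this
  exact_mod_cast this

/-- A countable group is left orderable iff it admits a faithful action by
orientation-preserving homeomorphisms of the line. -/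
theorem leftOrderable_iff_faithful_action (G : Type*) [Group G] [Countable G] :
    (∃ lo : LinearOrder G, ∀ a b c : G, lo.lt a b → lo.lt (c * a) (c * b)) ↔
    (∃ ρ : G →* (ℝ ≃o ℝ), Function.Injective ρ) := by
  constructor
  · rintro ⟨lo, hlo⟩
    letI := lo
    have hlt : ∀ a b c : G, c * a < c * b ↔ a < b := by
      intro a b c
      refine ⟨fun h => ?_, fun h => hlo a b c h⟩
      have := hlo _ _ c⁻¹ h
      simpa using this
    -- the countable dense linear order
    haveI : Countable (Lex (G × ℚ)) := Countable.of_equiv _ toLex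
    haveI : Nonempty (Lex (G × ℚ)) := ⟨toLex (1, 0)⟩
    haveI : DenselyOrdered (Lex (G × ℚ)) := by
      constructor
      intro x y hxy
      rcases Prod.Lex.lt_iff.mp hxy with h | ⟨h1, h2⟩
      · refine ⟨toLex ((ofLex x).1, (ofLex x).2 + 1), ?_, ?_⟩
        · exact Prod.Lex.lt_iff.mpr (Or.inr ⟨rfl, lt_add_one _⟩)
        · exact Prod.Lex.lt_iff.mpr (Or.inl h)
      · obtain ⟨s, hs1, hs2⟩ := exists_between h2
        refine ⟨toLex ((ofLex x).1, s), ?_, ?_⟩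
        · exact Prod.Lex.lt_iff.mpr (Or.inr ⟨rfl, hs1⟩)
        · exact Prod.Lex.lt_iff.mpr (Or.inr ⟨h1, hs2⟩)
    obtain ⟨e⟩ := Order.iso_of_countable_dense ℚ (Lex (G × ℚ))
    -- action of G on Lex (G × ℚ)
    let φ : G → (Lex (G × ℚ) ≃o Lex (G × ℚ)) := fun g =>
      { toFun := fun x => toLex (g * (ofLex x).1, (ofLex x).2)
        invFun := fun x => toLex (g⁻¹ * (ofLex x).1, (ofLex x).2)
        left_inv := fun x => by simp
        right_inv := fun x => by simp
        map_rel_iff' := by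
          intro x y
          constructor
          · intro h
            rcases Prod.Lex.le_iff.mp h with h | ⟨h1, h2⟩
            · exact Prod.Lex.le_iff.mpr (Or.inl ((hlt _ _ g).mp h))
            · exact Prod.Lex.le_iff.mpr (Or.inr ⟨mul_left_cancel h1, h2⟩)
          · intro h
            rcases Prod.Lex.le_iff.mp h with h | ⟨h1, h2⟩
            · exact Prod.Lex.le_iff.mpr (Or.inl ((hlt _ _ g).mpr h))
            · exact Prod.Lex.le_iff.mpr (Or.inr ⟨congrArg (fun a : G => g * a) h1, h2⟩) }
    have hφ : ∀ g h x, φ (g * h) x = φ g (φ h x) := by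
      intro g h x
      show toLex _ = toLex _
      simp [φ, mul_assoc]
    -- transport to ℚ
    let Ψ : G →* (ℚ ≃o ℚ) := MonoidHom.mk' (fun g => (e.trans (φ g)).trans e.symm) (by
      intro a b
      ext q
      show e.symm (φ (a * b) (e q)) = e.symm (φ a (e (e.symm (φ b (e q)))))
      rw [e.apply_symm_apply, hφ])
    have hΨ : Function.Injective ⇑Ψ := by
      rw [injective_iff_map_eq_one]
      intro g hg
      have h1 : ∀ q : ℚ, e.symm (φ g (e q)) = q := fun q => by
        have := congrFun (congrArg (fun (f : ℚ ≃o ℚ) => (f : ℚ → ℚ)) hg) q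
        exact this
      have h2 : φ g (toLex (1, 0)) = toLex (1, 0) := by
        have := h1 (e.symm (toLex (1, 0)))
        rw [e.apply_symm_apply] at this
        have := congrArg e this
        simpa using this
      have : (g * 1, (0:ℚ)) = ((1 : G), (0:ℚ)) := toLex.injective h2
      simpa using congrArg Prod.fst this
    refine ⟨extHom.comp Ψ, ?_⟩
    rw [MonoidHom.coe_comp]
    exact extHom_injective.comp hΨ
  · rintro ⟨ρ, hρ⟩
    obtain ⟨e, he⟩ := exists_surjective_nat ℚ
    let T : G → Lex (ℕ → ℝ) := fun g => toLex (fun n => ρ g (e n))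
    have hT : Function.Injective T := by
      intro a b h
      apply hρ
      refine orderIso_real_ext fun q => ?_
      obtain ⟨n, rfl⟩ := he q
      exact congrFun (toLex.injective h) n
    refine ⟨LinearOrder.lift' T hT, ?_⟩
    intro a b c hab
    have hab' : T a < T b := hab
    obtain ⟨i, hj, hi⟩ := hab'
    show T (c * a) < T (c * b)
    refine ⟨i, fun j hji => ?_, ?_⟩
    · show ρ (c * a) (e j) = ρ (c * b) (e j)
      rw [map_mul, map_mul]
      exact congrArg (ρ c) (hj j hji)
    · show ρ (c * a) (e i) < ρ (c * b) (e i)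
      rw [map_mul, map_mul]
      show ρ c (ρ a (e i)) < ρ c (ρ b (e i))
      exact (ρ c).strictMono hi
end

section
/- Let G be a countable left orderable group, < a left order on G with dynamical realization ρ (a homomorphism G → Homeo₊(ℝ) such that f < g iff ρ(f)(0) < ρ(g)(0)). If ρ can be approximated arbitrarily well (in the topology of pointwise convergence with the compact-open topology on Homeo₊(ℝ)) by homomorphisms ρ' : G → Homeo₊(ℝ) having nontrivial stabilizer of some point in the ρ'-orbit of 0, then < is not isolated in the space of left orders LO(G). -/
/-- A left-invariant strict total order on a group. -/
def IsLeftOrder (G : Type*) [Group G] (r : G → G → Prop) : Prop :=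
  IsStrictTotalOrder G r ∧ ∀ a b c : G, r a b → r (c * a) (c * b)

/-- Proposition: let `r` be a left order on a countable group `G` with dynamical
realization `ρ` (so `r f g ↔ ρ(f)(0) < ρ(g)(0)`). If `ρ` can be approximated
arbitrarily well, uniformly on compact sets over any finite set of group
elements, by representations `ρ'` having a nontrivial stabilizer of some point
of the `ρ'`-orbit of `0`, then `r` is not isolated in the space of left orders:
for every finite set `F` of `r`-positive elements there is a left order `r' ≠ r`
making every element of `F` positive. -/
theorem not_isolated_of_approx (G : Type*) [Group G] [Countable G]
    (r : G → G → Prop) (hr : IsLeftOrder G r)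
    (ρ : G →* (ℝ ≃o ℝ))
    (hreal : ∀ f g : G, r f g ↔ ρ f 0 < ρ g 0)
    (happrox : ∀ (F : Finset G) (K : Set ℝ), IsCompact K → ∀ ε : ℝ, 0 < ε →
      ∃ ρ' : G →* (ℝ ≃o ℝ),
        (∀ g ∈ F, ∀ x ∈ K, |ρ' g x - ρ g x| ≤ ε) ∧
        (∃ g : G, g ≠ 1 ∧ ∃ h : G, ρ' g (ρ' h 0) = ρ' h 0)) :
    ∀ F : Finset G, (∀ g ∈ F, r 1 g) →
      ∃ r' : G → G → Prop, IsLeftOrder G r' ∧ r' ≠ r ∧ ∀ g ∈ F, r' 1 g := by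
  intro F hF
  obtain ⟨hsto, hinv⟩ := hr
  haveI := hsto
  have hasymm : ∀ a b : G, r a b → r b a → False := fun a b h1 h2 =>
    irrefl_of r a (trans_of r h1 h2)
  have hpos : ∀ g ∈ F, 0 < ρ g 0 := by
    intro g hg
    have := (hreal 1 g).mp (hF g hg)
    simpa using this
  obtain ⟨ε, hε, hεF⟩ : ∃ ε > 0, ∀ g ∈ F, ε < ρ g 0 := by
    rcases F.eq_empty_or_nonempty with h | h
    · exact ⟨1, one_pos, by simp [h]⟩
    · have hinf : 0 < F.inf' h fun g => ρ g 0 := by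
        obtain ⟨g, hg, hgeq⟩ := F.exists_mem_eq_inf' h fun g => ρ g 0
        rw [hgeq]; exact hpos g hg
      refine ⟨(F.inf' h fun g => ρ g 0) / 2, by linarith, ?_⟩
      intro g hg
      have h1 := Finset.inf'_le (fun g => ρ g 0) hg
      linarith
  obtain ⟨ρ', hρ'F, g₀, hg₀, h0, hfix⟩ := happrox F {0} isCompact_singleton ε hε
  have happ : ∀ c a : G, ρ' (c * a) 0 = ρ' c (ρ' a 0) := by
    intro c a; rw [map_mul]; rfl
  set r' : G → G → Prop := fun a b => ρ' a 0 < ρ' b 0 ∨ (ρ' a 0 = ρ' b 0 ∧ r b a)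
    with hr'def
  have hirr : ∀ a : G, ¬ r' a a := by
    intro a hab
    rcases hab with h | ⟨_, h⟩
    · exact lt_irrefl _ h
    · exact irrefl_of r a h
  have htrans : ∀ a b c : G, r' a b → r' b c → r' a c := by
    intro a b c hab hbc
    rcases hab with h1 | ⟨h1, h1'⟩ <;> rcases hbc with h2 | ⟨h2, h2'⟩
    · exact Or.inl (h1.trans h2)
    · exact Or.inl (h2 ▸ h1)
    · exact Or.inl (h1 ▸ h2)
    · exact Or.inr ⟨h1.trans h2, trans_of r h2' h1'⟩
  have htri : ∀ a b : G, r' a b ∨ a = b ∨ r' b a := by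
    intro a b
    rcases lt_trichotomy (ρ' a 0) (ρ' b 0) with h | h | h
    · exact Or.inl (Or.inl h)
    · rcases trichotomous_of r b a with hba | hba | hba
      · exact Or.inl (Or.inr ⟨h, hba⟩)
      · exact Or.inr (Or.inl hba.symm)
      · exact Or.inr (Or.inr (Or.inr ⟨h.symm, hba⟩))
    · exact Or.inr (Or.inr (Or.inl h))
  have hr'lo : IsLeftOrder G r' := by
    constructor
    · exact { irrefl := hirr, trans := htrans, trichotomous := fun a b h1 h2 => ((htri a b).resolve_left h1).resolve_right h2 }
    · intro a b c hab
      rcases hab with h | ⟨h, h'⟩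
      · exact Or.inl (by rw [happ, happ]; exact (ρ' c).lt_iff_lt.mpr h)
      · exact Or.inr ⟨by rw [happ, happ, h], hinv b a c h'⟩
  have hfix' : ρ' (g₀ * h0) 0 = ρ' h0 0 := by rw [happ]; exact hfix
  have hne : g₀ * h0 ≠ h0 := fun hh => hg₀ (mul_eq_right.mp hh)
  refine ⟨r', hr'lo, ?_, ?_⟩
  · intro heq
    rcases trichotomous_of r (g₀ * h0) h0 with h1 | h1 | h1
    · have : r' (g₀ * h0) h0 := heq ▸ h1
      rcases this with h2 | ⟨_, h2⟩
      · exact lt_irrefl _ (hfix' ▸ h2)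
      · exact hasymm _ _ h1 h2
    · exact hne h1
    · have : r' (g₀ * h0) h0 := Or.inr ⟨hfix', h1⟩
      rw [heq] at this
      exact hasymm _ _ this h1
  · intro g hg
    have hb := hρ'F g hg 0 (by simp)
    have h1 : ρ' 1 0 = 0 := by simp
    have h2 := abs_le.mp hb
    refine Or.inl ?_
    rw [h1]
    have := hεF g hg
    linarith [h2.1]
end

section
/- Let ρ : F_n → Homeo₊(ℝ), points p₁,…,p_k ∈ ℝ and words v₁,…,v_k, w ∈ F_n with w reduced and nonempty. Set d_{ij} = d_{v_j}(S(ρ,v_j,p_j), i) and d_i = d_w(S(ρ,w,p), i). If p ≥ max of all entries of the trajectories S(ρ,v_j,p_j) for j = 1,…,k, then there exists an index i₀ such that d_{i₀} ≥ max_j d_{i₀ j}. -/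
/-- The homeomorphism corresponding to a letter `xᵢ^{±1}`. -/
def ofLetter {n : ℕ} (ρ : FreeGroup (Fin n) →* (ℝ ≃o ℝ)) (a : Fin n × Bool) : ℝ ≃o ℝ :=
  if a.2 then ρ (FreeGroup.of a.1) else (ρ (FreeGroup.of a.1))⁻¹

/-- The trajectory `S(ρ,w,x) = (ρ(w₀)(x), …, ρ(w_m)(x))` of `x` by the word
`w = a_m ⋯ a₁` (letters applied from the right, so we scan over the reversed
reduced word of `w`). -/
def traj {n : ℕ} (ρ : FreeGroup (Fin n) →* (ℝ ≃o ℝ)) (w : FreeGroup (Fin n))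
    (x : ℝ) : List ℝ :=
  (w.toWord.reverse).scanl (fun y a => ofLetter ρ a y) x

/-- `D_w(S,i)`: the set of points `s_j` of the sequence `S` at which the
generator `xᵢ` is applied, i.e. `a_{j+1} = xᵢ` or `a_j = xᵢ⁻¹`. Here `L` is the
list of letters of `w` in order of application (`L[j-1] = a_j`). -/
def Dset {n : ℕ} (L : List (Fin n × Bool)) (S : List ℝ) (i : Fin n) : Set ℝ :=
  {y | ∃ j : ℕ, S[j]? = some y ∧
    (L[j]? = some (i, true) ∨ (1 ≤ j ∧ L[j - 1]? = some (i, false)))}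

/-- `d_w(S,i) = max D_w(S,i)`, with value `⊥ = -∞` when `xᵢ` does not occur. -/
noncomputable def dmax {n : ℕ} (L : List (Fin n × Bool)) (S : List ℝ) (i : Fin n) :
    EReal :=
  sSup ((fun y : ℝ => (y : EReal)) '' (Dset L S i))

lemma scanl_succ' {β : Type*} (f : ℝ → β → ℝ) :
    ∀ (L : List β) (x : ℝ) (j : ℕ) (a : β) (y : ℝ),
      L[j]? = some a → (L.scanl f x)[j]? = some y →
      (L.scanl f x)[j+1]? = some (f y a) := by
  intro L
  induction L with
  | nil => intro x j a y ha; simp at ha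
  | cons b t ih =>
    intro x j a y ha hy
    cases j with
    | zero =>
      simp at ha; subst ha
      simp [List.scanl] at hy ⊢
      subst hy
      cases t <;> simp [List.scanl]
    | succ j =>
      simp [List.scanl] at ha hy ⊢
      exact ih (f x b) j a y ha hy

lemma scanl_zero' {β : Type*} (f : ℝ → β → ℝ) (L : List β) (x : ℝ) :
    (L.scanl f x)[0]? = some x := by
  cases L <;> simp [List.scanl]

lemma dset_bound {n : ℕ} (ρ : FreeGroup (Fin n) →* (ℝ ≃o ℝ)) (i : Fin n)
    (L : List (Fin n × Bool)) (x q : ℝ)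
    (h : ∀ y ∈ L.scanl (fun y a => ofLetter ρ a y) x, y ≤ q) :
    ∀ y ∈ Dset L (L.scanl (fun y a => ofLetter ρ a y) x) i,
      y ≤ q ∧ ρ (FreeGroup.of i) y ≤ q := by
  set S := L.scanl (fun y a => ofLetter ρ a y) x with hS
  rintro y ⟨j, hj, hcase⟩
  have hymem : y ∈ S := by
    obtain ⟨hlt, he⟩ := List.getElem?_eq_some_iff.1 hj
    exact he ▸ List.getElem_mem hlt
  refine ⟨h y hymem, ?_⟩
  rcases hcase with hL | ⟨hj1, hL⟩
  · have hnext : S[j+1]? = some (ofLetter ρ (i, true) y) :=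
      scanl_succ' _ L x j (i, true) y hL hj
    have hm : ofLetter ρ (i, true) y ∈ S := by
      obtain ⟨hlt, he⟩ := List.getElem?_eq_some_iff.1 hnext
      exact he ▸ List.getElem_mem hlt
    have := h _ hm
    simpa [ofLetter] using this
  · have hjlt : j - 1 < S.length := by
      have h1 : j - 1 < L.length := (List.getElem?_eq_some_iff.1 hL).1
      have : S.length = L.length + 1 := by simp [hS, List.length_scanl]
      omega
    set y' := S[j-1] with hy'
    have hprev : S[j-1]? = some y' := List.getElem?_eq_getElem hjlt
    have hstep : S[(j-1)+1]? = some (ofLetter ρ (i, false) y') :=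
      scanl_succ' _ L x (j-1) (i, false) y' hL hprev
    rw [show (j-1)+1 = j by omega, hj] at hstep
    have hy : y = ofLetter ρ (i, false) y' := Option.some_inj.1 hstep
    have hy'mem : y' ∈ S := List.getElem_mem hjlt
    have : ρ (FreeGroup.of i) y = y' := by rw [hy]; simp [ofLetter]
    rw [this]
    exact h y' hy'mem

/-- Lemma: if p is greater than or equal to every entry of the trajectories
S(ρ,vⱼ,pⱼ), then there is a generator index i₀ with
d_{i₀} = d_w(S(ρ,w,p),i₀) ≥ max_j d_{vⱼ}(S(ρ,vⱼ,pⱼ),i₀). -/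
theorem exists_dominating_index (n k : ℕ) (ρ : FreeGroup (Fin n) →* (ℝ ≃o ℝ))
    (w : FreeGroup (Fin n)) (hw : w ≠ 1)
    (vs : Fin k → FreeGroup (Fin n)) (ps : Fin k → ℝ) (p : ℝ)
    (hp : ∀ j : Fin k, ∀ y ∈ traj ρ (vs j) (ps j), y ≤ p) :
    ∃ i₀ : Fin n, ∀ j : Fin k,
      dmax ((vs j).toWord.reverse) (traj ρ (vs j) (ps j)) i₀ ≤
        dmax (w.toWord.reverse) (traj ρ w p) i₀ := by
  classical
  set L := w.toWord.reverse with hLdef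
  set S := traj ρ w p with hSdef
  have hSL : S = L.scanl (fun y a => ofLetter ρ a y) p := rfl
  have hLne : L ≠ [] := by
    simp only [hLdef, ne_eq, List.reverse_eq_nil_iff]
    simpa [FreeGroup.toWord_eq_nil_iff] using hw
  have hLlen : 1 ≤ L.length := List.length_pos_iff.2 hLne
  have hSlen : S.length = L.length + 1 := by simp [hSL, List.length_scanl]
  have hSpos : 0 < S.length := by omega
  -- pick index of the maximum entry
  obtain ⟨M, -, hM⟩ := Finset.exists_max_image (Finset.univ : Finset (Fin S.length))
    (fun j => S[j.val]'j.isLt) ⟨⟨0, hSpos⟩, Finset.mem_univ _⟩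
  have hM' : ∀ j : Fin S.length, S[j.val]'j.isLt ≤ S[M.val]'M.isLt := fun j =>
    hM j (Finset.mem_univ _)
  have hS0 : S[0]'hSpos = p := by
    have := scanl_zero' (fun y a => ofLetter ρ a y) L p
    rw [← hSL] at this
    have := (List.getElem?_eq_getElem hSpos).symm.trans this
    exact Option.some_inj.1 this
  have hpM : p ≤ S[M.val]'M.isLt := hS0 ▸ hM' ⟨0, hSpos⟩
  -- key step: find i₀ and z ∈ Dset with z ≥ anything bounded as in dset_bound
  have key : ∃ (i₀ : Fin n) (z : ℝ), z ∈ Dset L S i₀ ∧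
      ∀ y : ℝ, y ≤ p → ρ (FreeGroup.of i₀) y ≤ p → y ≤ z := by
    have hMle : M.val ≤ L.length := by have := M.isLt; omega
    rcases lt_or_eq_of_le hMle with hMlt | hMeq
    · -- there is a letter applied at s_M
      rcases hab : L[M.val]'hMlt with ⟨i, b⟩
      have hLM : L[M.val]? = some (i, b) := by
        rw [List.getElem?_eq_getElem hMlt, hab]
      cases b with
      | true =>
        refine ⟨i, S[M.val]'M.isLt, ⟨M.val, List.getElem?_eq_getElem M.isLt,
          Or.inl hLM⟩, ?_⟩
        intro y hy _
        exact hy.trans hpM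
      | false =>
        set z := ofLetter ρ (i, false) (S[M.val]'M.isLt) with hz
        have hnext : S[M.val+1]? = some z :=
          scanl_succ' (fun y a => ofLetter ρ a y) L p M.val (i, false) _ hLM
            (List.getElem?_eq_getElem M.isLt)
        refine ⟨i, z, ⟨M.val + 1, hnext, Or.inr ⟨by omega, by simpa using hLM⟩⟩, ?_⟩
        intro y _ hy2
        have hgz : ρ (FreeGroup.of i) z = S[M.val]'M.isLt := by
          rw [hz]; simp [ofLetter]
        have : ρ (FreeGroup.of i) y ≤ ρ (FreeGroup.of i) z := by
          rw [hgz]; exact hy2.trans hpM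
        exact (OrderIso.le_iff_le _).1 this
    · -- M is the last index; there is a letter arriving at s_M
      have hMge : 1 ≤ M.val := by omega
      have hprevlt : M.val - 1 < L.length := by omega
      rcases hab : L[M.val - 1]'hprevlt with ⟨i, b⟩
      have hLM : L[M.val - 1]? = some (i, b) := by
        rw [List.getElem?_eq_getElem hprevlt, hab]
      cases b with
      | false =>
        refine ⟨i, S[M.val]'M.isLt, ⟨M.val, List.getElem?_eq_getElem M.isLt,
          Or.inr ⟨hMge, hLM⟩⟩, ?_⟩
        intro y hy _
        exact hy.trans hpM
      | true =>
        have hprevS : M.val - 1 < S.length := by omega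
        set z := S[M.val - 1]'hprevS with hz
        have hstep : S[(M.val-1)+1]? = some (ofLetter ρ (i, true) z) :=
          scanl_succ' (fun y a => ofLetter ρ a y) L p (M.val-1) (i, true) _ hLM
            (List.getElem?_eq_getElem hprevS)
        rw [show (M.val-1)+1 = M.val by omega,
          List.getElem?_eq_getElem M.isLt] at hstep
        have hgz : ρ (FreeGroup.of i) z = S[M.val]'M.isLt := by
          have := Option.some_inj.1 hstep
          simpa [ofLetter] using this.symm
        refine ⟨i, z, ⟨M.val - 1, List.getElem?_eq_getElem hprevS, Or.inl hLM⟩, ?_⟩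
        intro y _ hy2
        have : ρ (FreeGroup.of i) y ≤ ρ (FreeGroup.of i) z := by
          rw [hgz]; exact hy2.trans hpM
        exact (OrderIso.le_iff_le _).1 this
  obtain ⟨i₀, z, hzmem, hzprop⟩ := key
  refine ⟨i₀, fun j => ?_⟩
  have hzle : (z : EReal) ≤ dmax L S i₀ := le_sSup ⟨z, hzmem, rfl⟩
  refine le_trans (sSup_le ?_) hzle
  rintro e ⟨y, hy, rfl⟩
  have hb := dset_bound ρ i₀ ((vs j).toWord.reverse) (ps j) p (hp j) y hy
  show (y : EReal) ≤ (z : EReal)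
  exact_mod_cast hzprop y hb.1 hb.2
end

section
/- Let h ∈ Homeo₊(ℝ) and q ∈ Fix(h). If ψ₀ is a square root of the restriction h|_{(-∞,q)} (i.e., a homeomorphism of (-∞,q) with ψ₀² = h|_{(-∞,q)}), then ψ₀ extends to a square root ψ ∈ Homeo₊(ℝ) of h on all of ℝ. -/
open Set

namespace SqrtExt

noncomputable section

lemma zp_succ (g : ℝ ≃o ℝ) (n : ℤ) (x : ℝ) : (g^(n+1)) x = g ((g^n) x) := by
  rw [add_comm, zpow_one_add]; rfl

lemma zp_add (g : ℝ ≃o ℝ) (a b : ℤ) (x : ℝ) : (g^a) ((g^b) x) = (g^(a+b)) x := by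
  rw [zpow_add]; rfl

lemma zp_cancel (g : ℝ ≃o ℝ) (n : ℤ) (x : ℝ) : (g^(-n)) ((g^n) x) = x := by
  rw [zp_add, neg_add_cancel]; rfl

lemma zp_cancel' (g : ℝ ≃o ℝ) (n : ℤ) (x : ℝ) : (g^n) ((g^(-n)) x) = x := by
  rw [zp_add, add_neg_cancel]; rfl

lemma zp_comm (g : ℝ ≃o ℝ) (n : ℤ) (x : ℝ) : (g^n) (g x) = g ((g^n) x) := by
  rw [show g x = (g^(1:ℤ)) x by rfl, zp_add, zp_succ]

/-- x and y lie in the same component of the complement of the fixed set. -/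
def Rel (g : ℝ ≃o ℝ) (x y : ℝ) : Prop := ∀ z ∈ uIcc x y, g z ≠ z

lemma Rel.symm {g : ℝ ≃o ℝ} {x y : ℝ} (h : Rel g x y) : Rel g y x := by
  intro z hz; exact h z (by rwa [uIcc_comm])

lemma Rel.left {g : ℝ ≃o ℝ} {x y : ℝ} (h : Rel g x y) : g x ≠ x :=
  h x left_mem_uIcc

lemma Rel.right {g : ℝ ≃o ℝ} {x y : ℝ} (h : Rel g x y) : g y ≠ y :=
  h y right_mem_uIcc

lemma Rel.trans {g : ℝ ≃o ℝ} {x y z : ℝ} (h : Rel g x y) (h' : Rel g y z) :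
    Rel g x z := by
  intro w hw
  rcases uIcc_subset_uIcc_union_uIcc (b := y) hw with hw' | hw'
  · exact h w hw'
  · exact h' w hw'

lemma rel_refl {g : ℝ ≃o ℝ} {x : ℝ} (hx : g x ≠ x) : Rel g x x := by
  intro z hz; rw [uIcc_self, mem_singleton_iff] at hz; rwa [hz]

lemma Rel.of_mem {g : ℝ ≃o ℝ} {x y z : ℝ} (h : Rel g x y) (hz : z ∈ uIcc x y) :
    Rel g x z :=
  fun w hw => h w (uIcc_subset_uIcc left_mem_uIcc hz hw)

/-- the image of a non-fixed point is in the same component -/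
lemma rel_apply {g : ℝ ≃o ℝ} {x : ℝ} (hx : g x ≠ x) : Rel g x (g x) := by
  intro z hz hzfix
  have hzs : g.symm z = z := by conv_lhs => rw [← hzfix, g.symm_apply_apply]
  rcases lt_or_gt_of_ne hx with hlt | hgt
  · rw [uIcc_of_ge hlt.le, mem_Icc] at hz
    have hxz : x ≤ z := by
      have := g.symm.le_iff_le.2 hz.1
      rwa [hzs, g.symm_apply_apply] at this
    have hzx : z = x := le_antisymm hz.2 hxz
    rw [hzx] at hzfix; exact hx hzfix
  · rw [uIcc_of_le hgt.le, mem_Icc] at hz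
    have : z ≤ x := by
      have := g.symm.le_iff_le.2 hz.2
      rwa [hzs, g.symm_apply_apply] at this
    have hzx : z = x := le_antisymm this hz.1
    rw [hzx] at hzfix; exact hx hzfix


/-! ### basepoints via quotient -/

def cSetoid (g : ℝ ≃o ℝ) : Setoid {x : ℝ // g x ≠ x} where
  r a b := Rel g a.1 b.1
  iseqv := ⟨fun a => rel_refl a.2, Rel.symm, Rel.trans⟩

/-- a basepoint in the component of a non-fixed point, constant on components -/
def bp (g : ℝ ≃o ℝ) (a : {x : ℝ // g x ≠ x}) : ℝ :=
  (Quotient.mk (cSetoid g) a).out.1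

lemma bp_rel (g : ℝ ≃o ℝ) (a : {x : ℝ // g x ≠ x}) : Rel g (bp g a) a.1 :=
  Quotient.mk_out (s := cSetoid g) a

lemma bp_nfix (g : ℝ ≃o ℝ) (a : {x : ℝ // g x ≠ x}) : g (bp g a) ≠ bp g a :=
  (bp_rel g a).left

lemma bp_congr (g : ℝ ≃o ℝ) {a b : {x : ℝ // g x ≠ x}} (h : Rel g a.1 b.1) :
    bp g a = bp g b := by
  unfold bp
  rw [Quotient.sound (s := cSetoid g) h]

/-! ### orbits and tubes -/

section Tube

variable (g : ℝ ≃o ℝ) (c : ℝ)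

lemma orbit_strictMono {p : ℝ} (hp : p < g p) : StrictMono (fun n : ℤ => (g^n) p) := by
  apply strictMono_int_of_lt_succ
  intro n
  simp only [zp_succ]
  have : (g^n) p < (g^n) (g p) := (g^n).strictMono hp
  rwa [zp_comm] at this

def InTube (x : ℝ) : Prop := ∃ n : ℤ, (g^n) c ≤ x ∧ x < (g^(n+1)) c

open Classical in
def Nn (x : ℝ) : ℤ := if h : InTube g c x then h.choose else 0

variable {g c}

lemma Nn_spec {x : ℝ} (h : InTube g c x) :
    (g^(Nn g c x)) c ≤ x ∧ x < (g^(Nn g c x + 1)) c := by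
  rw [Nn, dif_pos h]; exact h.choose_spec


lemma Nn_unique (hc : c < g c) {x : ℝ} (h : InTube g c x) {n : ℤ}
    (h1 : (g^n) c ≤ x) (h2 : x < (g^(n+1)) c) : Nn g c x = n := by
  have hs := orbit_strictMono g hc
  have hspec := Nn_spec h
  by_contra hne
  rcases lt_or_gt_of_ne hne with hlt | hgt
  · have : (Nn g c x) + 1 ≤ n := hlt
    exact absurd (lt_of_lt_of_le hspec.2 (le_trans (hs.le_iff_le.2 this) h1)) (lt_irrefl x)
  · have : n + 1 ≤ Nn g c x := hgt
    exact absurd (lt_of_lt_of_le h2 (le_trans (hs.le_iff_le.2 this) hspec.1)) (lt_irrefl x)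

/-- every orbit point is in the component of the basepoint -/
lemma rel_orbit (hcf : g c ≠ c) : ∀ n : ℤ, Rel g c ((g^n) c) := by
  have key : ∀ p : ℝ, g p ≠ p → Rel g p (g p) := fun p hp => rel_apply hp
  have nf : ∀ n : ℤ, g ((g^n) c) ≠ (g^n) c := by
    intro n h
    have := (g^n).injective (a₁ := g c) (a₂ := c) ?_
    · exact hcf this
    · rw [zp_comm, h]
  intro n
  induction n using Int.induction_on with
  | zero => simpa using rel_refl hcf
  | succ k ih =>
      have : Rel g ((g^(k:ℤ)) c) ((g^((k:ℤ)+1)) c) := by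
        rw [zp_succ]; exact key _ (nf k)
      exact ih.trans this
  | pred k ih =>
      have e : (g^(-(k:ℤ))) c = g ((g^(-(k:ℤ)-1)) c) := by
        have h1 := zp_succ g (-(k:ℤ)-1) c
        rw [show (-(k:ℤ)-1)+1 = -(k:ℤ) by ring] at h1
        exact h1
      have h0 : Rel g ((g^(-(k:ℤ)-1)) c) ((g^(-(k:ℤ)))  c) := by
        rw [e]; exact key _ (nf _)
      exact ih.trans h0.symm

lemma rel_of_tube (hc : c < g c) {x : ℝ} (h : InTube g c x) : Rel g c x := by
  obtain ⟨n, h1, h2⟩ := h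
  have r1 : Rel g c ((g^n) c) := rel_orbit hc.ne' n
  have r2 : Rel g c ((g^(n+1)) c) := rel_orbit hc.ne' (n+1)
  have r3 : Rel g ((g^n) c) ((g^(n+1)) c) := r1.symm.trans r2
  have hx : x ∈ uIcc ((g^n) c) ((g^(n+1)) c) := by
    rw [uIcc_of_le (h1.trans h2.le)]
    exact ⟨h1, h2.le⟩
  exact r1.trans (r3.of_mem hx)

/-- the tube covers the whole component -/
lemma tube_of_rel (hc : c < g c) {x : ℝ} (hrel : Rel g c x) : InTube g c x := by
  have hs := orbit_strictMono g hc
  -- claim: some orbit point is above x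
  have claim_up : ∃ n : ℤ, x < (g^n) c := by
    by_cases hcx : x < c
    · exact ⟨0, by simpa using hcx⟩
    push_neg at hcx
    by_contra hcontra
    push_neg at hcontra
    set a : ℕ → ℝ := fun k => (g^(k:ℤ)) c with ha
    have hmono : Monotone a := fun i j hij => (hs.monotone (by exact_mod_cast hij))
    have hbdd : BddAbove (range a) := ⟨x, by rintro _ ⟨k, rfl⟩; exact hcontra _⟩
    set L := ⨆ k, a k with hL
    have htend : Filter.Tendsto a Filter.atTop (nhds L) := tendsto_atTop_ciSup hmono hbdd
    have htend2 : Filter.Tendsto (fun k => a (k+1)) Filter.atTop (nhds L) :=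
      htend.comp (Filter.tendsto_add_atTop_nat 1)
    have hga : ∀ k, a (k+1) = g (a k) := by
      intro k; rw [ha]; simp only [Nat.cast_add, Nat.cast_one]; exact zp_succ g _ _
    have htend3 : Filter.Tendsto (fun k => g (a k)) Filter.atTop (nhds (g L)) :=
      (g.continuous.tendsto L).comp htend
    have hfix : g L = L := by
      apply tendsto_nhds_unique htend3
      simpa only [← hga] using htend2
    have hcL : c ≤ L := le_ciSup hbdd 0 |>.trans_eq' (by simp [ha])
    have hLx : L ≤ x := ciSup_le fun k => hcontra _
    exact hrel L (by rw [uIcc_of_le (hcL.trans hLx)]; exact ⟨hcL, hLx⟩) hfix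
  have claim_down : ∃ n : ℤ, (g^n) c ≤ x := by
    by_cases hcx : c ≤ x
    · exact ⟨0, by simpa using hcx⟩
    push_neg at hcx
    by_contra hcontra
    push_neg at hcontra
    set a : ℕ → ℝ := fun k => (g^(-(k:ℤ))) c with ha
    have hanti : Antitone a := by
      intro i j hij
      exact hs.monotone (by simp; exact_mod_cast hij)
    have hbdd : BddBelow (range a) := ⟨x, by rintro _ ⟨k, rfl⟩; exact (hcontra _).le⟩
    set L := ⨅ k, a k with hL
    have htend : Filter.Tendsto a Filter.atTop (nhds L) := tendsto_atTop_ciInf hanti hbdd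
    have htend2 : Filter.Tendsto (fun k => a (k+1)) Filter.atTop (nhds L) :=
      htend.comp (Filter.tendsto_add_atTop_nat 1)
    have hga : ∀ k, a k = g (a (k+1)) := by
      intro k
      show (g^(-(k:ℤ))) c = g ((g^(-((k+1:ℕ)):ℤ)) c)
      have e1 : (-((k+1:ℕ)):ℤ) = -(k:ℤ)-1 := by push_cast; ring
      have e : (g^(-(k:ℤ))) c = g ((g^(-(k:ℤ)-1)) c) := by
        have h1 := zp_succ g (-(k:ℤ)-1) c
        rw [show (-(k:ℤ)-1)+1 = -(k:ℤ) by ring] at h1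
        exact h1
      rw [e1]; exact e
    have htend3 : Filter.Tendsto (fun k => g (a (k+1))) Filter.atTop (nhds (g L)) :=
      (g.continuous.tendsto L).comp htend2
    have hfix : g L = L := by
      apply tendsto_nhds_unique htend3
      exact Filter.Tendsto.congr (fun k => (hga k)) htend
    have hLc : L ≤ c := ciInf_le hbdd 0 |>.trans_eq (by simp [ha])
    have hxL : x ≤ L := le_ciInf fun k => (hcontra _).le
    exact hrel L (by rw [uIcc_of_ge (hxL.trans hLc)]; exact ⟨hxL, hLc⟩) hfix
  obtain ⟨n₁, hn₁⟩ := claim_up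
  obtain ⟨n₀, hn₀⟩ := claim_down
  obtain ⟨n, hn, hmax⟩ := Int.exists_greatest_of_bdd
    (P := fun n => (g^n) c ≤ x)
    ⟨n₁, fun z hz => by
      by_contra hlt
      push_neg at hlt
      exact absurd (lt_of_le_of_lt hz hn₁) (not_lt.2 (hs.monotone hlt.le))⟩
    ⟨n₀, hn₀⟩
  refine ⟨n, hn, ?_⟩
  by_contra hle
  push_neg at hle
  exact absurd (hmax (n+1) hle) (by omega)
end Tube

/-! ### the square root map on one component -/

def dd (g : ℝ ≃o ℝ) (c : ℝ) : ℝ := (g c - c)/2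

def mm (g : ℝ ≃o ℝ) (c : ℝ) : ℝ := c + dd g c

open Classical in
def A (g : ℝ ≃o ℝ) (c x : ℝ) : ℝ :=
  if (g^(-(Nn g c x))) x < mm g c
  then (g^(Nn g c x)) ((g^(-(Nn g c x))) x + dd g c)
  else (g^(Nn g c x)) (g ((g^(-(Nn g c x))) x - dd g c))

section AProps

variable {g : ℝ ≃o ℝ} {c : ℝ}

lemma dd_pos (hc : c < g c) : 0 < dd g c := by simp only [dd]; linarith

lemma mm_lt (hc : c < g c) : mm g c < g c := by have := dd_pos hc; simp only [mm, dd] at *; linarith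

lemma lt_mm (hc : c < g c) : c < mm g c := by have := dd_pos hc; simp only [mm] at *; linarith

lemma u_mem {x : ℝ} (hx : InTube g c x) :
    c ≤ (g^(-(Nn g c x))) x ∧ (g^(-(Nn g c x))) x < g c := by
  obtain ⟨h1, h2⟩ := Nn_spec hx
  constructor
  · have := (g^(-(Nn g c x))).monotone h1
    rwa [zp_cancel] at this
  · have := (g^(-(Nn g c x))).strictMono h2
    rwa [zp_add, show -(Nn g c x) + (Nn g c x + 1) = 1 by ring, zpow_one] at this

lemma x_eq {x : ℝ} : (g^(Nn g c x)) ((g^(-(Nn g c x))) x) = x := zp_cancel' g _ x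

/-- The key structural lemma: A maps the tube to itself, squares to g, and
satisfies midpoint-orbit bounds. -/
lemma A_step (hc : c < g c) {x : ℝ} (hx : InTube g c x) :
    InTube g c (A g c x) ∧ A g c (A g c x) = g x ∧
    (g^(Nn g c x)) (mm g c) ≤ A g c x ∧ A g c x < (g^(Nn g c x + 1)) (mm g c) := by
  have hd := dd_pos hc
  have hm1 := lt_mm hc
  have hm2 := mm_lt hc
  obtain ⟨hu1, hu2⟩ := u_mem (hx := hx)
  set n := Nn g c x with hn
  set u := (g^(-n)) x with hu
  have hgc : g c = mm g c + dd g c := by simp only [mm, dd]; ring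
  by_cases h1 : u < mm g c
  · have hA : A g c x = (g^n) (u + dd g c) := by rw [A, if_pos (by rw [← hn, ← hu]; exact h1)]
    have hb1 : mm g c ≤ u + dd g c := by simp only [mm]; linarith
    have hb2 : u + dd g c < g c := by rw [hgc]; linarith
    have hAl : (g^n) (mm g c) ≤ A g c x := by rw [hA]; exact (g^n).monotone hb1
    have hAu : A g c x < (g^(n+1)) c := by
      rw [hA, zp_succ, ← zp_comm]
      exact (g^n).strictMono hb2
    have hAtube : InTube g c (A g c x) :=
      ⟨n, le_trans ((g^n).monotone hm1.le) hAl, hAu⟩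
    have hNA : Nn g c (A g c x) = n :=
      Nn_unique hc hAtube (le_trans ((g^n).monotone hm1.le) hAl) hAu
    have huA : (g^(-n)) (A g c x) = u + dd g c := by rw [hA, zp_cancel]
    have hAA : A g c (A g c x) = g x := by
      rw [A, hNA, huA, if_neg (not_lt.2 hb1)]
      rw [add_sub_cancel_right, zp_comm, hu, zp_cancel']
    refine ⟨hAtube, hAA, hAl, ?_⟩
    exact hAu.trans_le ((g^(n+1)).monotone hm1.le)
  · push_neg at h1
    have hA : A g c x = (g^n) (g (u - dd g c)) := by
      rw [A, if_neg (by rw [← hn, ← hu]; exact not_lt.2 h1)]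
    have hb1 : c ≤ u - dd g c := by simp only [mm] at h1; linarith
    have hb2 : u - dd g c < mm g c := by rw [hgc] at hu2; linarith
    have hAl : (g^(n+1)) c ≤ A g c x := by
      rw [hA, zp_succ, ← zp_comm g n c]
      exact (g^n).monotone (g.monotone hb1)
    have hAu : A g c x < (g^(n+1)) (mm g c) := by
      rw [hA, zp_succ, ← zp_comm]
      exact (g^n).strictMono (g.strictMono hb2)
    have hAu2 : A g c x < (g^(n+1+1)) c := by
      refine hAu.trans ?_
      rw [zp_succ (n := n+1), ← zp_comm]
      exact (g^(n+1)).strictMono hm2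
    have hAtube : InTube g c (A g c x) := ⟨n+1, hAl, hAu2⟩
    have hNA : Nn g c (A g c x) = n + 1 := Nn_unique hc hAtube hAl hAu2
    have huA : (g^(-(n+1))) (A g c x) = u - dd g c := by
      rw [hA, zp_comm, ← zp_succ, zp_cancel]
    have hAA : A g c (A g c x) = g x := by
      rw [A, hNA, huA, if_pos hb2, sub_add_cancel, zp_succ, hu, zp_cancel']
    refine ⟨hAtube, hAA, ?_, hAu⟩
    refine le_trans ?_ hAl
    rw [zp_succ, ← zp_comm]
    exact (g^n).monotone hm2.le


lemma Nn_le_of_le (hc : c < g c) {x y : ℝ} (hx : InTube g c x) (hy : InTube g c y)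
    (hxy : x ≤ y) : Nn g c x ≤ Nn g c y := by
  by_contra hlt
  push_neg at hlt
  have h1 := (Nn_spec hx).1
  have h2 := (Nn_spec hy).2
  have : Nn g c y + 1 ≤ Nn g c x := hlt
  exact absurd ((h2.trans_le ((orbit_strictMono g hc).monotone this)).trans_le (h1.trans hxy))
    (lt_irrefl y)

lemma A_mono (hc : c < g c) {x y : ℝ} (hx : InTube g c x) (hy : InTube g c y)
    (hxy : x < y) : A g c x < A g c y := by
  have hd := dd_pos hc
  have hm1 := lt_mm hc
  have hm2 := mm_lt hc
  have hmgm : mm g c < g (mm g c) := hm2.trans (g.strictMono hm1)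
  have hNle : Nn g c x ≤ Nn g c y := Nn_le_of_le hc hx hy hxy.le
  rcases eq_or_lt_of_le hNle with hNeq | hNlt
  · set n := Nn g c x with hn
    obtain ⟨hux1, hux2⟩ := u_mem (hx := hx)
    obtain ⟨huy1, huy2⟩ := u_mem (hx := hy)
    rw [← hNeq] at huy1 huy2
    have huu : (g^(-n)) x < (g^(-n)) y := (g^(-n)).strictMono hxy
    have hgc : g c = mm g c + dd g c := by simp only [mm, dd]; ring
    by_cases h1 : (g^(-n)) x < mm g c
    · have hAx : A g c x = (g^n) ((g^(-n)) x + dd g c) := by rw [A, ← hn, if_pos h1]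
      by_cases h2 : (g^(-n)) y < mm g c
      · have hAy : A g c y = (g^n) ((g^(-n)) y + dd g c) := by
          rw [A, ← hNeq, if_pos h2]
        rw [hAx, hAy]
        exact (g^n).strictMono (by linarith)
      · push_neg at h2
        have hAy : A g c y = (g^n) (g ((g^(-n)) y - dd g c)) := by
          rw [A, ← hNeq, if_neg (not_lt.2 h2)]
        rw [hAx, hAy]
        apply (g^n).strictMono
        have e1 : (g^(-n)) x + dd g c < g c := by rw [hgc]; linarith
        have e2 : g c ≤ g ((g^(-n)) y - dd g c) := g.monotone (by simp only [mm] at h2; linarith)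
        linarith
    · push_neg at h1
      have h2 : mm g c ≤ (g^(-n)) y := h1.trans huu.le
      have hAx : A g c x = (g^n) (g ((g^(-n)) x - dd g c)) := by
        rw [A, ← hn, if_neg (not_lt.2 h1)]
      have hAy : A g c y = (g^n) (g ((g^(-n)) y - dd g c)) := by
        rw [A, ← hNeq, if_neg (not_lt.2 h2)]
      rw [hAx, hAy]
      exact (g^n).strictMono (g.strictMono (by linarith))
  · have hb1 := (A_step hc hx).2.2.2
    have hb2 := (A_step hc hy).2.2.1
    refine hb1.trans_le (le_trans ?_ hb2)
    exact (orbit_strictMono g hmgm).monotone hNlt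

lemma A_surj (hc : c < g c) {y : ℝ} (hy : InTube g c y) :
    ∃ x, InTube g c x ∧ A g c x = y := by
  have hd := dd_pos hc
  have hm1 := lt_mm hc
  have hm2 := mm_lt hc
  have hgc : g c = mm g c + dd g c := by simp only [mm, dd]; ring
  obtain ⟨hv1, hv2⟩ := u_mem (hx := hy)
  set n := Nn g c y with hn
  set v := (g^(-n)) y with hv
  have hyv : (g^n) v = y := by rw [hv, zp_cancel']
  by_cases hvm : v < mm g c
  · refine ⟨(g^(n-1)) (v + dd g c), ?_, ?_⟩
    · refine ⟨n-1, (g^(n-1)).monotone (by simp only [mm] at *; linarith), ?_⟩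
      rw [show n - 1 + 1 = n by ring]
      have : v + dd g c < g c := by rw [hgc]; linarith
      calc (g^(n-1)) (v + dd g c) < (g^(n-1)) (g c) := (g^(n-1)).strictMono this
        _ = (g^n) c := by rw [zp_comm, ← zp_succ, show n - 1 + 1 = n by ring]
    · have htube : InTube g c ((g^(n-1)) (v + dd g c)) := by
        refine ⟨n-1, (g^(n-1)).monotone (by simp only [mm] at *; linarith), ?_⟩
        rw [show n - 1 + 1 = n by ring]
        have : v + dd g c < g c := by rw [hgc]; linarith
        calc (g^(n-1)) (v + dd g c) < (g^(n-1)) (g c) := (g^(n-1)).strictMono this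
          _ = (g^n) c := by rw [zp_comm, ← zp_succ, show n - 1 + 1 = n by ring]
      have hN : Nn g c ((g^(n-1)) (v + dd g c)) = n - 1 := by
        refine Nn_unique hc htube ?_ ?_
        · exact (g^(n-1)).monotone (by simp only [mm] at *; linarith)
        · rw [show n - 1 + 1 = n by ring]
          have : v + dd g c < g c := by rw [hgc]; linarith
          calc (g^(n-1)) (v + dd g c) < (g^(n-1)) (g c) := (g^(n-1)).strictMono this
            _ = (g^n) c := by rw [zp_comm, ← zp_succ, show n - 1 + 1 = n by ring]
      have hu : (g^(-(n-1))) ((g^(n-1)) (v + dd g c)) = v + dd g c := zp_cancel g _ _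
      rw [A, hN, hu, if_neg (not_lt.2 (by simp only [mm] at *; linarith))]
      rw [add_sub_cancel_right, zp_comm, ← zp_succ, show n - 1 + 1 = n by ring, hyv]
  · push_neg at hvm
    refine ⟨(g^n) (v - dd g c), ?_, ?_⟩
    · refine ⟨n, (g^n).monotone (by simp only [mm] at hvm; linarith), ?_⟩
      rw [zp_succ, ← zp_comm]
      exact (g^n).strictMono (by rw [hgc] at hv2 ⊢; simp only [mm] at *; linarith)
    · have htube : InTube g c ((g^n) (v - dd g c)) := by
        refine ⟨n, (g^n).monotone (by simp only [mm] at hvm; linarith), ?_⟩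
        rw [zp_succ, ← zp_comm]
        exact (g^n).strictMono (by rw [hgc] at hv2 ⊢; simp only [mm] at *; linarith)
      have hN : Nn g c ((g^n) (v - dd g c)) = n := by
        refine Nn_unique hc htube ((g^n).monotone (by simp only [mm] at hvm; linarith)) ?_
        rw [zp_succ, ← zp_comm]
        exact (g^n).strictMono (by rw [hgc] at hv2 ⊢; simp only [mm] at *; linarith)
      have hu : (g^(-n)) ((g^n) (v - dd g c)) = v - dd g c := zp_cancel g _ _
      have hlt : v - dd g c < mm g c := by rw [hgc] at hv2; linarith
      rw [A, hN, hu, if_pos hlt, sub_add_cancel, hyv]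

end AProps



/-! ### negation conjugate -/

def conjNeg (g : ℝ ≃o ℝ) : ℝ ≃o ℝ :=
  StrictMono.orderIsoOfSurjective (fun x => -(g (-x)))
    (fun a b hab => by simpa using g.strictMono (neg_lt_neg hab))
    (fun y => ⟨-(g.symm (-y)), by simp⟩)

lemma conjNeg_apply (g : ℝ ≃o ℝ) (x : ℝ) : conjNeg g x = -(g (-x)) := by
  have := StrictMono.coe_orderIsoOfSurjective (fun x => -(g (-x)))
    (fun a b hab => by simpa using g.strictMono (neg_lt_neg hab))
    (fun y => ⟨-(g.symm (-y)), by simp⟩)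
  exact congrFun this x

lemma rel_conjNeg {g : ℝ ≃o ℝ} {a b : ℝ} (h : Rel g a b) :
    Rel (conjNeg g) (-a) (-b) := by
  intro z hz hfix
  rw [← neg_uIcc, Set.mem_neg] at hz
  rw [conjNeg_apply, neg_eq_iff_eq_neg] at hfix
  exact h (-z) hz hfix

lemma rel_of_conjNeg {g : ℝ ≃o ℝ} {a b : ℝ} (h : Rel (conjNeg g) (-a) (-b)) :
    Rel g a b := by
  intro z hz hfix
  refine h (-z) ?_ ?_
  · rw [← neg_uIcc]; exact Set.neg_mem_neg.2 hz
  · rw [conjNeg_apply, neg_neg, hfix]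

/-! ### the global square root -/

open Classical in
def fS (g : ℝ ≃o ℝ) (x : ℝ) : ℝ :=
  if hx : g x = x then x
  else if bp g ⟨x, hx⟩ < g (bp g ⟨x, hx⟩) then A g (bp g ⟨x, hx⟩) x
  else -(A (conjNeg g) (-(bp g ⟨x, hx⟩)) (-x))

section Glue

variable {g : ℝ ≃o ℝ} {x : ℝ}

lemma neg_bp_lt {hx : g x ≠ x} (hcn : ¬ bp g ⟨x, hx⟩ < g (bp g ⟨x, hx⟩)) :
    -(bp g ⟨x, hx⟩) < conjNeg g (-(bp g ⟨x, hx⟩)) := by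
  rw [conjNeg_apply, neg_neg]
  have := lt_of_le_of_ne (not_lt.1 hcn) (bp_nfix g ⟨x, hx⟩)
  linarith

lemma tube_neg {hx : g x ≠ x} (hcn : ¬ bp g ⟨x, hx⟩ < g (bp g ⟨x, hx⟩)) :
    InTube (conjNeg g) (-(bp g ⟨x, hx⟩)) (-x) :=
  tube_of_rel (neg_bp_lt hcn) (rel_conjNeg (bp_rel g ⟨x, hx⟩))

lemma fS_eq_pos {hx : g x ≠ x} (hcp : bp g ⟨x, hx⟩ < g (bp g ⟨x, hx⟩)) :
    fS g x = A g (bp g ⟨x, hx⟩) x := by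
  rw [fS, dif_neg hx, if_pos hcp]

lemma fS_eq_neg {hx : g x ≠ x} (hcn : ¬ bp g ⟨x, hx⟩ < g (bp g ⟨x, hx⟩)) :
    fS g x = -(A (conjNeg g) (-(bp g ⟨x, hx⟩)) (-x)) := by
  rw [fS, dif_neg hx, if_neg hcn]

lemma fS_rel (hx : g x ≠ x) : Rel g x (fS g x) := by
  have hrel := bp_rel g ⟨x, hx⟩
  by_cases hcp : bp g ⟨x, hx⟩ < g (bp g ⟨x, hx⟩)
  · rw [fS_eq_pos hcp]
    have htube := tube_of_rel hcp hrel
    have h2 := rel_of_tube hcp (A_step hcp htube).1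
    exact (hrel.symm).trans h2
  · rw [fS_eq_neg hcp]
    have htube := tube_neg hcp
    have h2 := rel_of_tube (neg_bp_lt hcp) (A_step (neg_bp_lt hcp) htube).1
    have h3 : Rel g (bp g ⟨x, hx⟩) (-(A (conjNeg g) (-(bp g ⟨x, hx⟩)) (-x))) :=
      rel_of_conjNeg (by rwa [neg_neg])
    exact hrel.symm.trans h3

lemma fS_nfix (hx : g x ≠ x) : g (fS g x) ≠ fS g x := (fS_rel hx).right

lemma bp_fS (hx : g x ≠ x) : bp g ⟨fS g x, fS_nfix hx⟩ = bp g ⟨x, hx⟩ :=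
  bp_congr g (fS_rel hx).symm

end Glue

lemma fS_sq (g : ℝ ≃o ℝ) (x : ℝ) : fS g (fS g x) = g x := by
  by_cases hx : g x = x
  · have e : fS g x = x := by rw [fS, dif_pos hx]
    rw [e, e]; exact hx.symm
  · have hx' := fS_nfix hx
    have hrel := bp_rel g ⟨x, hx⟩
    by_cases hcp : bp g ⟨x, hx⟩ < g (bp g ⟨x, hx⟩)
    · have htube := tube_of_rel hcp hrel
      rw [fS, dif_neg hx']
      rw [show (⟨fS g x, hx'⟩ : {z : ℝ // g z ≠ z}) = ⟨fS g x, fS_nfix hx⟩ from rfl, bp_fS hx]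
      rw [if_pos hcp, fS_eq_pos hcp]
      exact (A_step hcp htube).2.1
    · have hcp' := neg_bp_lt hcp
      have htube := tube_neg hcp
      rw [fS, dif_neg hx']
      rw [show (⟨fS g x, hx'⟩ : {z : ℝ // g z ≠ z}) = ⟨fS g x, fS_nfix hx⟩ from rfl, bp_fS hx]
      rw [if_neg hcp, fS_eq_neg hcp, neg_neg]
      rw [(A_step hcp' htube).2.1, conjNeg_apply, neg_neg, neg_neg]

lemma fS_mono (g : ℝ ≃o ℝ) : StrictMono (fS g) := by
  intro x y hxy
  by_cases hx : g x = x <;> by_cases hy : g y = y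
  · rw [fS, dif_pos hx, fS, dif_pos hy]; exact hxy
  · have e : fS g x = x := by rw [fS, dif_pos hx]
    rw [e]
    by_contra hno
    push_neg at hno
    exact fS_rel hy x (by rw [mem_uIcc]; right; exact ⟨hno, hxy.le⟩) hx
  · have e : fS g y = y := by rw [fS, dif_pos hy]
    rw [e]
    by_contra hno
    push_neg at hno
    exact fS_rel hx y (by rw [mem_uIcc]; left; exact ⟨hxy.le, hno⟩) hy
  · by_cases hrelxy : Rel g x y
    · have hbp : bp g ⟨x, hx⟩ = bp g ⟨y, hy⟩ := bp_congr g hrelxy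
      have hrelx := bp_rel g ⟨x, hx⟩
      have hrely := bp_rel g ⟨y, hy⟩
      rw [← hbp] at hrely
      by_cases hcp : bp g ⟨x, hx⟩ < g (bp g ⟨x, hx⟩)
      · rw [fS_eq_pos hcp, fS_eq_pos (hx := hy) (hbp ▸ hcp), ← hbp]
        exact A_mono hcp (tube_of_rel hcp hrelx) (tube_of_rel hcp hrely) hxy
      · rw [fS_eq_neg hcp, fS_eq_neg (hx := hy) (hbp ▸ hcp), ← hbp]
        have hcp' := neg_bp_lt hcp
        have h1 := tube_of_rel hcp' (rel_conjNeg hrelx)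
        have h2 := tube_of_rel hcp' (rel_conjNeg hrely)
        exact neg_lt_neg (A_mono hcp' h2 h1 (neg_lt_neg hxy))
    · simp only [Rel, not_forall, Classical.not_imp, not_not] at hrelxy
      obtain ⟨z, hzmem, hzfix⟩ := hrelxy
      rw [uIcc_of_le hxy.le, mem_Icc] at hzmem
      have h1 : fS g x < z := by
        by_contra hno
        push_neg at hno
        exact fS_rel hx z (by rw [mem_uIcc]; left; exact ⟨hzmem.1, hno⟩) hzfix
      have h2 : z < fS g y := by
        by_contra hno
        push_neg at hno
        exact fS_rel hy z (by rw [mem_uIcc]; right; exact ⟨hno, hzmem.2⟩) hzfix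
      exact h1.trans h2

lemma fS_surj (g : ℝ ≃o ℝ) : Function.Surjective (fS g) := by
  intro y
  by_cases hy : g y = y
  · exact ⟨y, by rw [fS, dif_pos hy]⟩
  · have hrel := bp_rel g ⟨y, hy⟩
    by_cases hcp : bp g ⟨y, hy⟩ < g (bp g ⟨y, hy⟩)
    · obtain ⟨x, hxt, hxA⟩ := A_surj hcp (tube_of_rel hcp hrel)
      have hxrel := rel_of_tube hcp hxt
      have hxnf : g x ≠ x := hxrel.right
      have hbp : bp g ⟨x, hxnf⟩ = bp g ⟨y, hy⟩ := bp_congr g (hxrel.symm.trans hrel)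
      refine ⟨x, ?_⟩
      rw [fS, dif_neg hxnf, hbp, if_pos hcp, hxA]
    · have hcp' := neg_bp_lt hcp
      obtain ⟨x', hxt, hxA⟩ := A_surj hcp' (tube_of_rel hcp' (rel_conjNeg hrel))
      have hxrel' := rel_of_tube hcp' hxt
      have hxrel : Rel g (bp g ⟨y, hy⟩) (-x') :=
        rel_of_conjNeg (by rwa [neg_neg])
      have hxnf : g (-x') ≠ -x' := hxrel.right
      have hbp : bp g ⟨-x', hxnf⟩ = bp g ⟨y, hy⟩ := bp_congr g (hxrel.symm.trans hrel)
      refine ⟨-x', ?_⟩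
      rw [fS, dif_neg hxnf, hbp, if_neg hcp, neg_neg, hxA, neg_neg]

theorem exists_sqrt (g : ℝ ≃o ℝ) : ∃ f : ℝ ≃o ℝ, ∀ x, f (f x) = g x := by
  refine ⟨StrictMono.orderIsoOfSurjective (fS g) (fS_mono g) (fS_surj g), fun x => ?_⟩
  have e := StrictMono.coe_orderIsoOfSurjective (fS g) (fS_mono g) (fS_surj g)
  rw [e]
  exact fS_sq g x


end
end SqrtExt


/-- If q is a fixed point of h ∈ Homeo₊(ℝ) and ψ₀ is a square root of the
restriction of h to (-∞,q) (a homeomorphism of (-∞,q) with ψ₀ ∘ ψ₀ = h there),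
then ψ₀ extends to a square root ψ ∈ Homeo₊(ℝ) of h. -/
theorem sqrt_extension (h : ℝ ≃o ℝ) (q : ℝ) (hq : h q = q) (ψ₀ : ℝ → ℝ)
    (hmono : StrictMonoOn ψ₀ (Iio q))
    (himage : ψ₀ '' Iio q = Iio q)
    (hsq : ∀ x < q, ψ₀ (ψ₀ x) = h x) :
    ∃ ψ : ℝ ≃o ℝ, (∀ x < q, ψ x = ψ₀ x) ∧ ∀ x : ℝ, ψ (ψ x) = h x := by
  classical
  -- the homeomorphism equal to h above q and to the identity below q
  set e : ℝ → ℝ := fun x => if x ≤ q then x else h x with he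
  have hgt : ∀ x : ℝ, q < x → q < h x := by
    intro x hx
    calc q = h q := hq.symm
      _ < h x := h.strictMono hx
  have em : StrictMono e := by
    intro a b hab
    by_cases ha : a ≤ q <;> by_cases hb : b ≤ q
    · simpa [he, ha, hb] using hab
    · push_neg at hb
      have : a ≤ q := ha
      simp only [he, if_pos ha, if_neg (not_le.2 hb)]
      exact lt_of_le_of_lt this (hgt b hb)
    · exact absurd (hab.trans_le hb) (not_lt.2 (not_le.1 ha).le)
    · push_neg at ha hb
      simp only [he, if_neg (not_le.2 ha), if_neg (not_le.2 hb)]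
      exact h.strictMono hab
  have es : Function.Surjective e := by
    intro y
    by_cases hy : y ≤ q
    · exact ⟨y, by simp [he, hy]⟩
    · push_neg at hy
      refine ⟨h.symm y, ?_⟩
      have hx : q < h.symm y := by
        have : h q < h (h.symm y) := by rw [h.apply_symm_apply, hq]; exact hy
        exact h.lt_iff_lt.1 this
      simp only [he, if_neg (not_le.2 hx)]
      exact h.apply_symm_apply y
  set h₂ : ℝ ≃o ℝ := StrictMono.orderIsoOfSurjective e em es with hh₂
  have e₂ : ⇑h₂ = e := StrictMono.coe_orderIsoOfSurjective e em es
  obtain ⟨f, hf⟩ := SqrtExt.exists_sqrt h₂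
  have hfix : ∀ x : ℝ, x ≤ q → f x = x := by
    intro x hxq
    have h2x : h₂ x = x := by rw [e₂]; simp [he, hxq]
    rcases lt_trichotomy (f x) x with hlt | heq | hgt'
    · have := f.strictMono hlt
      rw [hf x, h2x] at this
      exact absurd (this.trans hlt) (lt_irrefl x)
    · exact heq
    · have := f.strictMono hgt'
      rw [hf x, h2x] at this
      exact absurd (hgt'.trans this) (lt_irrefl x)
  have hfq : f q = q := hfix q le_rfl
  have hfge : ∀ x : ℝ, q ≤ x → q ≤ f x := by
    intro x hx
    calc q = f q := hfq.symm
      _ ≤ f x := f.monotone hx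
  have hψ₀mem : ∀ x, x < q → ψ₀ x < q := by
    intro x hx
    have : ψ₀ x ∈ Iio q := himage ▸ mem_image_of_mem ψ₀ hx
    exact this
  set ψf : ℝ → ℝ := fun x => if x < q then ψ₀ x else f x with hψf
  have ψm : StrictMono ψf := by
    intro a b hab
    by_cases ha : a < q <;> by_cases hb : b < q
    · simpa [hψf, ha, hb] using hmono ha hb hab
    · push_neg at hb
      simp only [hψf, if_pos ha, if_neg (not_lt.2 hb)]
      exact lt_of_lt_of_le (hψ₀mem a ha) (hfge b hb)
    · exact absurd ((not_lt.1 ha).trans_lt hab) (not_lt.2 hb.le)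
    · push_neg at ha hb
      simp only [hψf, if_neg (not_lt.2 ha), if_neg (not_lt.2 hb)]
      exact f.strictMono hab
  have ψs : Function.Surjective ψf := by
    intro y
    by_cases hy : y < q
    · have : y ∈ ψ₀ '' Iio q := by rw [himage]; exact hy
      obtain ⟨x, hx, hxe⟩ := this
      refine ⟨x, ?_⟩
      have hxq : x < q := hx
      have : ψf x = ψ₀ x := by simp [hψf, hxq]
      rw [this]; exact hxe
    · push_neg at hy
      refine ⟨f.symm y, ?_⟩
      have hx : q ≤ f.symm y := by
        have : f q ≤ f (f.symm y) := by rw [f.apply_symm_apply, hfq]; exact hy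
        exact f.le_iff_le.1 this
      simp only [hψf, if_neg (not_lt.2 hx)]
      exact f.apply_symm_apply y
  refine ⟨StrictMono.orderIsoOfSurjective ψf ψm ψs, ?_, ?_⟩
  · intro x hx
    have ec := StrictMono.coe_orderIsoOfSurjective ψf ψm ψs
    rw [ec]
    simp [hψf, hx]
  · intro x
    have ec := StrictMono.coe_orderIsoOfSurjective ψf ψm ψs
    rw [ec]
    by_cases hx : x < q
    · have h1 : ψf x = ψ₀ x := by simp [hψf, hx]
      have h2 : ψf (ψ₀ x) = ψ₀ (ψ₀ x) := by simp [hψf, hψ₀mem x hx]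
      rw [h1, h2]
      exact hsq x hx
    · push_neg at hx
      have h1 : ψf x = f x := by simp [hψf, not_lt.2 hx]
      have h2 : ψf (f x) = f (f x) := by simp [hψf, not_lt.2 (hfge x hx)]
      rw [h1, h2, hf x, e₂]
      rcases eq_or_lt_of_le hx with heq | hlt
      · simp [he, ← heq, hq]
      · simp [he, not_le.2 hlt]
end
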